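/- (Theorem 1, single cell) Let n, l be positive natural numbers, A an n×n real matrix, B an n×1 real matrix, K a 1×n real matrix, D an n×l real matrix. Let φ : ℝ → ℝ be an odd function, let 0 ≤ ρ₀ ≤ ρ₁, τ > 0, χ > 0, γ > 0, f̄ ≥ 0, and let P be a symmetric n×n real matrix with P − γI positive definite, such that for every diagonal matrix Ψ with each diagonal entry in {ρ₀, ρ₁} the block matrix [[(A+BKΨ)ᵀP + P(A+BKΨ) + τP, PD], [DᵀP, −χI_l]] is negative definite. Let f : ℝ → ℝˡ satisfy |f(t)|² ≤ f̄ for all t ≥ 0, and let x : ℝ → ℝⁿ be differentiable with x′(t) = A x(t) + B·(Σ_{j=1}^n k_j φ(x_j(t))) + D f(t) for all t ≥ 0, where K = [k₁, …, k_n]. Assume that for all t ≥ 0 and all j, ρ₀·x_j(t)² ≤ φ(x_j(t))·x_j(t) ≤ ρ₁·x_j(t)². Then V(t) = x(t)ᵀPx(t) satisfies V(t) ≤ χf̄/τ + (‖P‖·|x(0)|² + χf̄/τ)·e^{−τt} for all t ≥ 0, and limsup_{t→∞} |x(t)| ≤ √(χ f̄/(γτ)). -/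

import Mathlib

open Matrix Filter

/-- A real matrix is negative definite (as a quadratic form) if `zᵀ M z < 0`
for every nonzero vector `z`. -/
def NegDefQF {m : Type*} [Fintype m] (M : Matrix m m ℝ) : Prop :=
  ∀ z : m → ℝ, z ≠ 0 → z ⬝ᵥ M *ᵥ z < 0

/-- Euclidean norm of a vector in `ℝⁿ`. -/
noncomputable def eucNorm {n : ℕ} (v : Fin n → ℝ) : ℝ :=
  Real.sqrt (∑ i, v i ^ 2)

/-- Operator norm (w.r.t. the Euclidean norm) of a square real matrix. -/
noncomputable def opNorm {n : ℕ} (P : Matrix (Fin n) (Fin n) ℝ) : ℝ :=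
  ‖LinearMap.toContinuousLinearMap (Matrix.toEuclideanLin P)‖

lemma symmdot' {n : ℕ} (P : Matrix (Fin n) (Fin n) ℝ) (hP : P.IsSymm)
    (u v : Fin n → ℝ) : u ⬝ᵥ P *ᵥ v = v ⬝ᵥ P *ᵥ u := by
  rw [dotProduct_mulVec]
  nth_rewrite 1 [← hP]
  rw [vecMul_transpose, dotProduct_comm]

lemma BKd' {n : ℕ} (B : Matrix (Fin n) (Fin 1) ℝ) (K : Matrix (Fin 1) (Fin n) ℝ)
    (d u : Fin n → ℝ) :
    (B * K * Matrix.diagonal d) *ᵥ u = fun i => B i 0 * ∑ j, K 0 j * (d j * u j) := by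
  funext i
  simp [Matrix.mulVec, Matrix.mul_apply, dotProduct, Fin.sum_univ_one,
    Matrix.diagonal, Finset.mul_sum]
  apply Finset.sum_congr rfl
  intro j _
  rcases eq_or_ne j j with h | h
  · ring
  · simp at h

lemma key_id' {n l : ℕ} (A : Matrix (Fin n) (Fin n) ℝ) (B : Matrix (Fin n) (Fin 1) ℝ)
    (K : Matrix (Fin 1) (Fin n) ℝ) (D : Matrix (Fin n) (Fin l) ℝ)
    (P : Matrix (Fin n) (Fin n) ℝ) (hP : P.IsSymm) (τ χ : ℝ)
    (d u : Fin n → ℝ) (w : Fin l → ℝ) :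
    Sum.elim u w ⬝ᵥ (Matrix.fromBlocks
        ((A + B * K * Matrix.diagonal d)ᵀ * P + P * (A + B * K * Matrix.diagonal d) + τ • P)
        (P * D) (Dᵀ * P) ((-χ) • (1 : Matrix (Fin l) (Fin l) ℝ))) *ᵥ Sum.elim u w
    = 2 * (u ⬝ᵥ P *ᵥ (A *ᵥ u + (fun i => B i 0 * ∑ j, K 0 j * (d j * u j)) + D *ᵥ w))
      + τ * (u ⬝ᵥ P *ᵥ u) - χ * (w ⬝ᵥ w) := by
  set At := A + B * K * Matrix.diagonal d with hAt
  rw [fromBlocks_mulVec, sumElim_dotProduct_sumElim]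
  simp only [Sum.elim_comp_inl, Sum.elim_comp_inr]
  have h1 : (Atᵀ * P + P * At + τ • P) *ᵥ u + (P * D) *ᵥ w
      = Atᵀ *ᵥ (P *ᵥ u) + P *ᵥ (At *ᵥ u) + τ • (P *ᵥ u) + P *ᵥ (D *ᵥ w) := by
    rw [Matrix.add_mulVec, Matrix.add_mulVec, ← Matrix.mulVec_mulVec, ← Matrix.mulVec_mulVec,
      ← Matrix.mulVec_mulVec, Matrix.smul_mulVec]
  have h2 : (Dᵀ * P) *ᵥ u + ((-χ) • (1 : Matrix (Fin l) (Fin l) ℝ)) *ᵥ w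
      = Dᵀ *ᵥ (P *ᵥ u) + (-χ) • w := by
    rw [← Matrix.mulVec_mulVec, Matrix.smul_mulVec, Matrix.one_mulVec]
  rw [h1, h2]
  rw [dotProduct_add, dotProduct_add, dotProduct_add, dotProduct_add]
  have e1 : u ⬝ᵥ Atᵀ *ᵥ (P *ᵥ u) = u ⬝ᵥ P *ᵥ (At *ᵥ u) := by
    rw [dotProduct_mulVec u Atᵀ, vecMul_transpose, dotProduct_comm, symmdot' P hP]
    exact dotProduct_comm _ _
  have e2 : w ⬝ᵥ Dᵀ *ᵥ (P *ᵥ u) = u ⬝ᵥ P *ᵥ (D *ᵥ w) := by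
    rw [dotProduct_mulVec w Dᵀ, vecMul_transpose, dotProduct_comm, symmdot' P hP]
    exact dotProduct_comm _ _
  have e3 : u ⬝ᵥ τ • (P *ᵥ u) = τ * (u ⬝ᵥ P *ᵥ u) := by
    rw [dotProduct_smul]; simp
  have e4 : w ⬝ᵥ (-χ) • w = -χ * (w ⬝ᵥ w) := by
    rw [dotProduct_smul]; simp
  rw [e1, e2, e3, e4]
  have e6 : u ⬝ᵥ P *ᵥ (A *ᵥ u + (fun i => B i 0 * ∑ j, K 0 j * (d j * u j)) + D *ᵥ w)
      = u ⬝ᵥ P *ᵥ (At *ᵥ u) + u ⬝ᵥ P *ᵥ (D *ᵥ w) := by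
    rw [hAt, Matrix.add_mulVec, BKd', Matrix.mulVec_add, Matrix.mulVec_add, dotProduct_add,
      dotProduct_add]
  rw [e6]; ring

lemma keybound' {n l : ℕ} (A : Matrix (Fin n) (Fin n) ℝ) (B : Matrix (Fin n) (Fin 1) ℝ)
    (K : Matrix (Fin 1) (Fin n) ℝ) (D : Matrix (Fin n) (Fin l) ℝ)
    (P : Matrix (Fin n) (Fin n) ℝ) (hPsymm : P.IsSymm) (τ χ ρ₀ ρ₁ : ℝ)
    (φ : ℝ → ℝ) (hφ0 : φ 0 = 0)
    (hvertex : ∀ d : Fin n → ℝ, (∀ i, d i = ρ₀ ∨ d i = ρ₁) →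
      NegDefQF (Matrix.fromBlocks
        ((A + B * K * Matrix.diagonal d)ᵀ * P + P * (A + B * K * Matrix.diagonal d) + τ • P)
        (P * D) (Dᵀ * P) ((-χ) • (1 : Matrix (Fin l) (Fin l) ℝ))))
    (u : Fin n → ℝ) (w : Fin l → ℝ)
    (hsec : ∀ j, ρ₀ * (u j) ^ 2 ≤ φ (u j) * u j ∧ φ (u j) * u j ≤ ρ₁ * (u j) ^ 2) :
    2 * (u ⬝ᵥ P *ᵥ (A *ᵥ u + (fun i => B i 0 * ∑ j, K 0 j * φ (u j)) + D *ᵥ w))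
      + τ * (u ⬝ᵥ P *ᵥ u) - χ * (w ⬝ᵥ w) ≤ 0 := by
  set α := u ⬝ᵥ P *ᵥ (fun i => B i 0) with hα
  set dd : Fin n → ℝ := fun j => if 0 ≤ α * K 0 j * u j then ρ₁ else ρ₀ with hdd
  have hddmem : ∀ i, dd i = ρ₀ ∨ dd i = ρ₁ := by
    intro i
    by_cases h : 0 ≤ α * K 0 i * u i <;> simp [hdd, h]
  have hq : Sum.elim u w ⬝ᵥ (Matrix.fromBlocks
        ((A + B * K * Matrix.diagonal dd)ᵀ * P + P * (A + B * K * Matrix.diagonal dd) + τ • P)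
        (P * D) (Dᵀ * P) ((-χ) • (1 : Matrix (Fin l) (Fin l) ℝ))) *ᵥ Sum.elim u w ≤ 0 := by
    rcases eq_or_ne (Sum.elim u w) (0 : Fin n ⊕ Fin l → ℝ) with h0 | hne
    · rw [h0]; simp
    · exact (hvertex dd hddmem _ hne).le
  rw [key_id' A B K D P hPsymm τ χ dd u w] at hq
  have hterm : ∀ j, α * K 0 j * φ (u j) ≤ (α * K 0 j * u j) * dd j := by
    intro j
    rcases eq_or_ne (u j) 0 with hu | hu
    · simp [hu, hφ0]
    · have hu2 : 0 < (u j) ^ 2 := by positivity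
      have h1 := (hsec j).1
      have h2 := (hsec j).2
      by_cases hc : 0 ≤ α * K 0 j * u j
      · have hddj : dd j = ρ₁ := by simp [hdd, hc]
        rw [hddj]
        have hmul : 0 ≤ (α * K 0 j * u j) * (ρ₁ * (u j) ^ 2 - φ (u j) * u j) :=
          mul_nonneg hc (by linarith)
        have hexp : (α * K 0 j * u j) * (ρ₁ * (u j) ^ 2 - φ (u j) * u j)
            = (u j) ^ 2 * ((α * K 0 j * u j) * ρ₁ - α * K 0 j * φ (u j)) := by ring
        rw [hexp] at hmul
        have := (mul_nonneg_iff_of_pos_left hu2).mp hmul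
        linarith
      · push_neg at hc
        have hddj : dd j = ρ₀ := by simp [hdd, not_le.mpr hc]
        rw [hddj]
        have hmul : 0 ≤ (-(α * K 0 j * u j)) * (φ (u j) * u j - ρ₀ * (u j) ^ 2) :=
          mul_nonneg (by linarith) (by linarith)
        have hexp : (-(α * K 0 j * u j)) * (φ (u j) * u j - ρ₀ * (u j) ^ 2)
            = (u j) ^ 2 * ((α * K 0 j * u j) * ρ₀ - α * K 0 j * φ (u j)) := by ring
        rw [hexp] at hmul
        have := (mul_nonneg_iff_of_pos_left hu2).mp hmul
        linarith
  have hsum : α * (∑ j, K 0 j * φ (u j)) ≤ α * (∑ j, K 0 j * (dd j * u j)) := by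
    rw [Finset.mul_sum, Finset.mul_sum]
    apply Finset.sum_le_sum
    intro j _
    calc α * (K 0 j * φ (u j)) = α * K 0 j * φ (u j) := by ring
      _ ≤ (α * K 0 j * u j) * dd j := hterm j
      _ = α * (K 0 j * (dd j * u j)) := by ring
  have hsmul : ∀ s : ℝ, u ⬝ᵥ P *ᵥ (fun i => B i 0 * s) = α * s := by
    intro s
    have h : (fun i => B i 0 * s) = s • (fun i => B i 0) := by
      funext i; simp [mul_comm]
    rw [h, Matrix.mulVec_smul, dotProduct_smul, smul_eq_mul, hα, mul_comm]
  have expand : ∀ vv : Fin n → ℝ, u ⬝ᵥ P *ᵥ (A *ᵥ u + vv + D *ᵥ w)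
      = u ⬝ᵥ P *ᵥ (A *ᵥ u) + u ⬝ᵥ P *ᵥ vv + u ⬝ᵥ P *ᵥ (D *ᵥ w) := by
    intro vv
    rw [Matrix.mulVec_add, Matrix.mulVec_add, dotProduct_add, dotProduct_add]
  rw [expand, hsmul] at hq ⊢
  linarith

lemma hasDerivV {n : ℕ} (P : Matrix (Fin n) (Fin n) ℝ) (hP : P.IsSymm)
    (x : ℝ → Fin n → ℝ) (v : Fin n → ℝ) (t : ℝ) (hx : HasDerivAt x v t) :
    HasDerivAt (fun s => x s ⬝ᵥ P *ᵥ x s) (2 * (x t ⬝ᵥ P *ᵥ v)) t := by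
  have hc : ∀ i, HasDerivAt (fun s => x s i) (v i) t := fun i => hasDerivAt_pi.mp hx i
  have h : HasDerivAt (fun s => ∑ i, x s i * ∑ j, P i j * x s j)
      (∑ i, (v i * ∑ j, P i j * x t j + x t i * ∑ j, P i j * v j)) t :=
    HasDerivAt.fun_sum fun i _ =>
      (hc i).mul (HasDerivAt.fun_sum fun j _ => (hc j).const_mul (P i j))
  have hfun : (fun s => x s ⬝ᵥ P *ᵥ x s) = fun s => ∑ i, x s i * ∑ j, P i j * x s j := by
    funext s; simp [dotProduct, Matrix.mulVec]
  have hval : (∑ i, (v i * ∑ j, P i j * x t j + x t i * ∑ j, P i j * v j))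
      = 2 * (x t ⬝ᵥ P *ᵥ v) := by
    rw [Finset.sum_add_distrib]
    have h1 : (∑ i, v i * ∑ j, P i j * x t j) = v ⬝ᵥ P *ᵥ x t := by
      simp [dotProduct, Matrix.mulVec]
    have h2 : (∑ i, x t i * ∑ j, P i j * v j) = x t ⬝ᵥ P *ᵥ v := by
      simp [dotProduct, Matrix.mulVec]
    rw [h1, h2, symmdot' P hP]; ring
  rw [hfun, ← hval]; exact h

lemma gammabound {n : ℕ} (P : Matrix (Fin n) (Fin n) ℝ) (γ : ℝ)
    (hPγ : ∀ z : Fin n → ℝ, z ≠ 0 →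
      0 < z ⬝ᵥ (P - γ • (1 : Matrix (Fin n) (Fin n) ℝ)) *ᵥ z)
    (z : Fin n → ℝ) : γ * (∑ i, z i ^ 2) ≤ z ⬝ᵥ P *ᵥ z := by
  rcases eq_or_ne z 0 with rfl | hz
  · simp
  · have h := hPγ z hz
    rw [Matrix.sub_mulVec, dotProduct_sub, Matrix.smul_mulVec, Matrix.one_mulVec,
      dotProduct_smul] at h
    have hzz : z ⬝ᵥ z = ∑ i, z i ^ 2 := by simp [dotProduct, sq]
    rw [hzz, smul_eq_mul] at h
    linarith

lemma V0bound {n : ℕ} (P : Matrix (Fin n) (Fin n) ℝ) (u : Fin n → ℝ) :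
    u ⬝ᵥ P *ᵥ u ≤ opNorm P * (eucNorm u) ^ 2 := by
  rw [opNorm, eucNorm]
  set y : EuclideanSpace ℝ (Fin n) := (WithLp.equiv 2 _).symm u with hy
  set T := LinearMap.toContinuousLinearMap (Matrix.toEuclideanLin P) with hT
  have hnorm : Real.sqrt (∑ i, u i ^ 2) = ‖y‖ := by
    rw [EuclideanSpace.norm_eq]
    congr 1
    apply Finset.sum_congr rfl
    intro i _
    rw [Real.norm_eq_abs, sq_abs]
    rfl
  have hinner : u ⬝ᵥ P *ᵥ u = inner ℝ y (T y) := by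
    rw [PiLp.inner_apply]
    simp only [RCLike.inner_apply, starRingEnd_apply, star_trivial]
    rw [dotProduct_comm]
    rfl
  rw [hinner, hnorm]
  calc inner ℝ y (T y) ≤ ‖y‖ * ‖T y‖ := real_inner_le_norm _ _
    _ ≤ ‖y‖ * (‖T‖ * ‖y‖) := by
        have := T.le_opNorm y
        nlinarith [norm_nonneg (T y), norm_nonneg y]
    _ = ‖T‖ * ‖y‖ ^ 2 := by ring

/-- Theorem 1, single cell: for the closed loop
`x' = Ax + B(Σⱼ kⱼ φ(xⱼ)) + Df` with the sector condition
`ρ₀ xⱼ² ≤ φ(xⱼ)xⱼ ≤ ρ₁ xⱼ²` along the trajectory, and the LMI satisfied at the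
vertices, the Lyapunov function `V = xᵀPx` obeys the exponential bound, and
`limsup |x(t)| ≤ √(χf̄/(γτ))`. -/
theorem stmt_8 (n l : ℕ) (hn : 0 < n) (hl : 0 < l)
    (A : Matrix (Fin n) (Fin n) ℝ) (B : Matrix (Fin n) (Fin 1) ℝ)
    (K : Matrix (Fin 1) (Fin n) ℝ) (D : Matrix (Fin n) (Fin l) ℝ)
    (φ : ℝ → ℝ) (hodd : ∀ s, φ (-s) = -φ s)
    (ρ₀ ρ₁ τ χ γ fbar : ℝ) (hρ₀ : 0 ≤ ρ₀) (hρ : ρ₀ ≤ ρ₁)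
    (hτ : 0 < τ) (hχ : 0 < χ) (hγ : 0 < γ) (hf : 0 ≤ fbar)
    (P : Matrix (Fin n) (Fin n) ℝ) (hPsymm : P.IsSymm)
    (hPγ : ∀ z : Fin n → ℝ, z ≠ 0 →
      0 < z ⬝ᵥ (P - γ • (1 : Matrix (Fin n) (Fin n) ℝ)) *ᵥ z)
    (hvertex : ∀ d : Fin n → ℝ, (∀ i, d i = ρ₀ ∨ d i = ρ₁) →
      NegDefQF (Matrix.fromBlocks
        ((A + B * K * Matrix.diagonal d)ᵀ * P + P * (A + B * K * Matrix.diagonal d) + τ • P)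
        (P * D) (Dᵀ * P) ((-χ) • (1 : Matrix (Fin l) (Fin l) ℝ))))
    (f : ℝ → Fin l → ℝ) (hfb : ∀ t ≥ (0 : ℝ), ∑ i, (f t i) ^ 2 ≤ fbar)
    (x : ℝ → Fin n → ℝ)
    (hx : ∀ t ≥ (0 : ℝ), HasDerivAt x
      (A *ᵥ x t + (fun i => B i 0 * ∑ j, K 0 j * φ (x t j)) + D *ᵥ f t) t)
    (hsector : ∀ t ≥ (0 : ℝ), ∀ j,
      ρ₀ * (x t j) ^ 2 ≤ φ (x t j) * x t j ∧ φ (x t j) * x t j ≤ ρ₁ * (x t j) ^ 2) :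
    (∀ t ≥ (0 : ℝ),
      x t ⬝ᵥ P *ᵥ x t ≤ χ * fbar / τ +
        (opNorm P * (eucNorm (x 0)) ^ 2 + χ * fbar / τ) * Real.exp (-τ * t)) ∧
    limsup (fun t => eucNorm (x t)) atTop ≤ Real.sqrt (χ * fbar / (γ * τ)) := by

  have hφ0 : φ 0 = 0 := by have h := hodd 0; rw [neg_zero] at h; linarith
  set c := χ * fbar / τ with hc
  have hc0 : 0 ≤ c := div_nonneg (mul_nonneg hχ.le hf) hτ.le
  set N := opNorm P * (eucNorm (x 0)) ^ 2 with hN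
  have hV0N : x 0 ⬝ᵥ P *ᵥ x 0 ≤ N := V0bound P (x 0)
  have keyb : ∀ t ≥ (0 : ℝ),
      2 * (x t ⬝ᵥ P *ᵥ (A *ᵥ x t + (fun i => B i 0 * ∑ j, K 0 j * φ (x t j)) + D *ᵥ f t))
        ≤ -τ * (x t ⬝ᵥ P *ᵥ x t) + χ * fbar := by
    intro t ht
    have h := keybound' A B K D P hPsymm τ χ ρ₀ ρ₁ φ hφ0 hvertex (x t) (f t)
      (fun j => hsector t ht j)
    have hww : f t ⬝ᵥ f t ≤ fbar := by
      have h1 := hfb t ht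
      have h2 : f t ⬝ᵥ f t = ∑ i, (f t i) ^ 2 := by simp [dotProduct, sq]
      linarith
    have h3 : χ * (f t ⬝ᵥ f t) ≤ χ * fbar := mul_le_mul_of_nonneg_left hww hχ.le
    linarith
  have part1 : ∀ t ≥ (0 : ℝ),
      x t ⬝ᵥ P *ᵥ x t ≤ c + (N + c) * Real.exp (-τ * t) := by
    intro b hb
    have hcont : ContinuousOn (fun s => x s ⬝ᵥ P *ᵥ x s) (Set.Icc 0 b) := by
      intro s hs
      exact ((hasDerivV P hPsymm x _ s (hx s hs.1)).continuousAt).continuousWithinAt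
    have hg := le_gronwallBound_of_liminf_deriv_right_le
      (f := fun s => x s ⬝ᵥ P *ᵥ x s)
      (f' := fun s => 2 * (x s ⬝ᵥ P *ᵥ
        (A *ᵥ x s + (fun i => B i 0 * ∑ j, K 0 j * φ (x s j)) + D *ᵥ f s)))
      (δ := x 0 ⬝ᵥ P *ᵥ x 0) (K := -τ) (ε := χ * fbar) (a := 0) (b := b)
      hcont
      (fun s hs r hr =>
        ((hasDerivV P hPsymm x _ s (hx s hs.1)).hasDerivWithinAt).liminf_right_slope_le hr)
      le_rfl
      (fun s hs => keyb s hs.1)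
      b (Set.right_mem_Icc.mpr hb)
    have hKne : (-τ : ℝ) ≠ 0 := by linarith
    rw [gronwallBound_of_K_ne_0 hKne] at hg
    simp only [sub_zero] at hg
    have hEpos : (0 : ℝ) < Real.exp (-τ * b) := Real.exp_pos _
    have hdiv : χ * fbar / (-τ) = -c := by rw [hc, div_neg]
    rw [hdiv] at hg
    nlinarith [mul_nonneg (sub_nonneg.mpr hV0N) hEpos.le, mul_nonneg hc0 hEpos.le]
  refine ⟨part1, ?_⟩
  have hxb : ∀ t ≥ (0 : ℝ),
      eucNorm (x t) ≤ Real.sqrt ((c + (N + c) * Real.exp (-τ * t)) / γ) := by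
    intro t ht
    have h1 := gammabound P γ hPγ (x t)
    have h2 := part1 t ht
    have h3 : (∑ i, x t i ^ 2) ≤ (c + (N + c) * Real.exp (-τ * t)) / γ := by
      rw [le_div_iff₀ hγ]
      nlinarith
    exact Real.sqrt_le_sqrt h3
  have h1 : Tendsto (fun t : ℝ => Real.exp (-τ * t)) atTop (nhds 0) := by
    have ha : Tendsto (fun t : ℝ => τ * t) atTop atTop :=
      Tendsto.const_mul_atTop hτ tendsto_id
    have hb : Tendsto (fun t : ℝ => -τ * t) atTop atBot := by
      simp only [neg_mul]; exact tendsto_neg_atBot_iff.mpr ha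
    exact Real.tendsto_exp_atBot.comp hb
  have hlim : Tendsto (fun t : ℝ => Real.sqrt ((c + (N + c) * Real.exp (-τ * t)) / γ)) atTop
      (nhds (Real.sqrt (c / γ))) := by
    have h2 : Tendsto (fun t : ℝ => (c + (N + c) * Real.exp (-τ * t)) / γ) atTop
        (nhds (c / γ)) := by
      have := ((h1.const_mul (N + c)).const_add c).div_const γ
      simpa using this
    exact h2.sqrt
  have heq : Real.sqrt (c / γ) = Real.sqrt (χ * fbar / (γ * τ)) := by
    rw [hc, div_div, mul_comm τ γ]
  have hmono : (fun t => eucNorm (x t)) ≤ᶠ[atTop]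
      fun t : ℝ => Real.sqrt ((c + (N + c) * Real.exp (-τ * t)) / γ) :=
    (eventually_ge_atTop (0 : ℝ)).mono fun t ht => hxb t ht
  have hcb : IsCoboundedUnder (· ≤ ·) atTop (fun t => eucNorm (x t)) := by
    apply isCoboundedUnder_le_of_eventually_le atTop (x := 0)
    filter_upwards with t
    exact Real.sqrt_nonneg _
  have hbd : IsBoundedUnder (· ≤ ·) atTop
      (fun t : ℝ => Real.sqrt ((c + (N + c) * Real.exp (-τ * t)) / γ)) :=
    hlim.isBoundedUnder_le
  calc limsup (fun t => eucNorm (x t)) atTop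
      ≤ limsup (fun t : ℝ => Real.sqrt ((c + (N + c) * Real.exp (-τ * t)) / γ)) atTop :=
        limsup_le_limsup hmono hcb hbd
    _ = Real.sqrt (c / γ) := hlim.limsup_eq
    _ = Real.sqrt (χ * fbar / (γ * τ)) := heq
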